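/- Under the outer-channel parameter definitions, let n ≥ 2 and let t, t₀ be integers with 1 ≤ t₀ < t ≤ n − 1. For integers 0 ≤ t₀' ≤ t' ≤ n − 1 define M(t', t₀') = ((n−1)! / (t₀'! · (t' − t₀')! · (n − 1 − t')!)) · (q/2)^{t'} · (1 − q)^{n−1−t'}. Set A = M(t−1, t₀−1)(p₁+p₄) + M(t, t₀)(p₂+p₃) + M(t−1, t₀)p₅ and B = M(t−1, t₀)(p₁+p₄) + M(t, t₀)(p₂+p₃) + M(t−1, t₀−1)p₅. Then A·Den = B·Num, i.e., the likelihood ratio A/B from Eqn. (34) equals the closed-form soft information Num/Den of Eqn. (11). (This is the concluding identity in the proof of Proposition 2.) -/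

import Mathlib

/-- **Concluding identity of the proof of Proposition 2.**  With
`M(t', t₀') = ((n−1)!/(t₀'! (t'−t₀')! (n−1−t')!)) (q/2)^{t'} (1−q)^{n−1−t'}`
and `A, B` the numerator and denominator of the likelihood ratio of
Eqn. (34), one has `A·Den = B·Num`, i.e. `A/B` equals the closed-form
soft information `Num/Den` of Eqn. (11). -/
theorem stmt6 (l a n : ℕ) (ha : 1 ≤ a) (hla : a < l) (hn : 2 ≤ n)
    (pc pe ps : ℝ) (hpc : 0 ≤ pc) (hpe : 0 ≤ pe) (hps : 0 ≤ ps)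
    (hsum : pc + pe + ps = 1)
    (q p₁ p₂ p₃ p₄ p₅ : ℝ)
    (hq : q = ps * 2 ^ (l - a) / (2 ^ l - 1))
    (hp₁ : p₁ = pc) (hp₂ : p₂ = pe)
    (hp₃ : p₃ = ps * ((2 : ℝ) ^ l - 2 ^ (l - a)) / (2 ^ l - 1))
    (hp₄ : p₄ = ps * ((2 : ℝ) ^ (l - a - 1) - 1) / (2 ^ l - 1))
    (hp₅ : p₅ = ps * 2 ^ (l - a - 1) / (2 ^ l - 1))
    (t t₀ : ℕ) (ht₀ : 1 ≤ t₀) (ht₀t : t₀ < t) (ht : t ≤ n - 1)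
    (M : ℕ → ℕ → ℝ)
    (hM : ∀ t' t₀' : ℕ, t₀' ≤ t' → t' ≤ n - 1 →
      M t' t₀' = ((n - 1).factorial : ℝ) /
          ((t₀'.factorial : ℝ) * ((t' - t₀').factorial : ℝ) * ((n - 1 - t').factorial : ℝ)) *
        (q / 2) ^ t' * (1 - q) ^ (n - 1 - t'))
    (Num Den A B : ℝ)
    (hNum : Num = 2 * (t₀ : ℝ) * (1 - q) * (p₁ + p₄) +
      ((n : ℝ) - (t : ℝ)) * q * (p₂ + p₃) + 2 * ((t : ℝ) - (t₀ : ℝ)) * (1 - q) * p₅)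
    (hDen : Den = 2 * ((t : ℝ) - (t₀ : ℝ)) * (1 - q) * (p₁ + p₄) +
      ((n : ℝ) - (t : ℝ)) * q * (p₂ + p₃) + 2 * (t₀ : ℝ) * (1 - q) * p₅)
    (hA : A = M (t - 1) (t₀ - 1) * (p₁ + p₄) + M t t₀ * (p₂ + p₃) + M (t - 1) t₀ * p₅)
    (hB : B = M (t - 1) t₀ * (p₁ + p₄) + M t t₀ * (p₂ + p₃) + M (t - 1) (t₀ - 1) * p₅) :
    A * Den = B * Num := by
  obtain ⟨a', rfl⟩ : ∃ a', t₀ = a' + 1 := ⟨t₀ - 1, by omega⟩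
  obtain ⟨b, rfl⟩ : ∃ b, t = a' + 1 + (b + 1) := ⟨t - (a' + 1) - 1, by omega⟩
  obtain ⟨c, rfl⟩ : ∃ c, n = a' + 1 + (b + 1) + c + 1 :=
    ⟨n - (a' + 1 + (b + 1)) - 1, by omega⟩
  have h1 := hM (a' + 1 + (b + 1)) (a' + 1) (by omega) (by omega)
  have h2 := hM (a' + 1 + (b + 1) - 1) (a' + 1 - 1) (by omega) (by omega)
  have h3 := hM (a' + 1 + (b + 1) - 1) (a' + 1) (by omega) (by omega)
  have e1 : a' + 1 + (b + 1) - 1 = a' + b + 1 := by omega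
  have e2 : a' + 1 - 1 = a' := by omega
  rw [e1] at h3
  rw [e1, e2] at h2 hA hB
  have e3 : a' + 1 + (b + 1) - (a' + 1) = b + 1 := by omega
  have e4 : a' + 1 + (b + 1) + c + 1 - 1 - (a' + 1 + (b + 1)) = c := by omega
  have e5 : a' + b + 1 - a' = b + 1 := by omega
  have e6 : a' + 1 + (b + 1) + c + 1 - 1 - (a' + b + 1) = c + 1 := by omega
  have e7 : a' + b + 1 - (a' + 1) = b := by omega
  have e8 : a' + 1 + (b + 1) + c + 1 - 1 = a' + b + c + 2 := by omega
  rw [e3, e4, e8] at h1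
  rw [e5, e6, e8] at h2
  rw [e7, e6, e8] at h3
  have fa : ((a'.factorial : ℝ)) ≠ 0 := Nat.cast_ne_zero.mpr a'.factorial_ne_zero
  have fb : ((b.factorial : ℝ)) ≠ 0 := Nat.cast_ne_zero.mpr b.factorial_ne_zero
  have fc : ((c.factorial : ℝ)) ≠ 0 := Nat.cast_ne_zero.mpr c.factorial_ne_zero
  have ha1 : ((a' : ℝ) + 1) ≠ 0 := by positivity
  have hb1 : ((b : ℝ) + 1) ≠ 0 := by positivity
  have hc1 : ((c : ℝ) + 1) ≠ 0 := by positivity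
  set K : ℝ := ((a' + b + c + 2).factorial : ℝ) /
      (((a' + 1).factorial : ℝ) * ((b + 1).factorial : ℝ) * ((c + 1).factorial : ℝ)) *
      (q / 2) ^ (a' + b + 1) * (1 - q) ^ c with hK
  have k1 : M (a' + 1 + (b + 1)) (a' + 1) = K * (((c : ℝ) + 1) * (q / 2)) := by
    rw [h1, hK]
    simp only [Nat.factorial_succ, show a' + 1 + (b + 1) = a' + b + 1 + 1 from by omega,
      pow_succ]
    push_cast
    field_simp
  have k2 : M (a' + b + 1) a' = K * (((a' : ℝ) + 1) * (1 - q)) := by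
    rw [h2, hK]
    simp only [Nat.factorial_succ, pow_succ]
    push_cast
    simp only [div_mul_eq_mul_div]
    rw [div_eq_div_iff (by positivity) (by positivity)]
    ring
  have k3 : M (a' + b + 1) (a' + 1) = K * (((b : ℝ) + 1) * (1 - q)) := by
    rw [h3, hK]
    simp only [Nat.factorial_succ, pow_succ]
    push_cast
    simp only [div_mul_eq_mul_div]
    rw [div_eq_div_iff (by positivity) (by positivity)]
    ring
  have hA' : A = (K / 2) * Num := by
    rw [hA, hNum, k1, k2, k3]
    push_cast
    ring
  have hB' : B = (K / 2) * Den := by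
    rw [hB, hDen, k1, k2, k3]
    push_cast
    ring
  rw [hA', hB']
  ring
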